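/- Characterization of fixed points of the generalized power method map: Let α ≥ 0 and G ∈ O(d)^{⊗n}. Then the following are equivalent: (a) G is a fixed point of T_α, i.e. G ∈ T_α(G); (b) for each i ∈ [n], C̃_iᵀ G G_iᵀ = (C̃_iᵀ G (C̃_iᵀ G)ᵀ)^{1/2} (the positive semidefinite square root); (c) for each i ∈ [n], tr(C̃_iᵀ G G_iᵀ) = ‖C̃_iᵀ G‖_*; (d) tr(Gᵀ C̃ G) = Σ_{i=1}^n ‖C̃_iᵀ G‖_*. -/

import Mathlib

open Matrix BigOperators

noncomputable section
namespace GroupSync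

variable {n d : ℕ}

/-- Frobenius norm of a real matrix. -/
def frob {m k : Type*} [Fintype m] [Fintype k] (X : Matrix m k ℝ) : ℝ :=
  Real.sqrt (∑ i, ∑ j, (X i j) ^ 2)

/-- Spectral (operator) norm of a real matrix: the operator norm of the induced
linear map between Euclidean spaces. -/
def spec {m k : Type*} [Fintype m] [Fintype k] [DecidableEq k] (X : Matrix m k ℝ) : ℝ :=
  ‖LinearMap.toContinuousLinearMap (Matrix.toEuclideanLin X)‖

/-- Nuclear norm: trace of the positive semidefinite square root of `X * Xᵀ`
(i.e. the sum of the singular values of `X`). -/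
def nuclear {m k : Type*} [Fintype m] [Fintype k] [DecidableEq m] (X : Matrix m k ℝ) : ℝ :=
  ((Matrix.posSemidef_self_mul_conjTranspose X).1.eigenvectorUnitary.1 *
    Matrix.diagonal ((RCLike.ofReal : ℝ → ℝ) ∘ (√·) ∘ (Matrix.posSemidef_self_mul_conjTranspose X).1.eigenvalues) *
    (star (Matrix.posSemidef_self_mul_conjTranspose X).1.eigenvectorUnitary :
      Matrix m m ℝ)).trace

/-- The positive semidefinite square root of `X * Xᵀ`. -/
def psdSqrtMulT {m k : Type*} [Fintype m] [Fintype k] [DecidableEq m] (X : Matrix m k ℝ) :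
    Matrix m m ℝ :=
  (Matrix.posSemidef_self_mul_conjTranspose X).1.eigenvectorUnitary.1 *
    Matrix.diagonal ((RCLike.ofReal : ℝ → ℝ) ∘ (√·) ∘ (Matrix.posSemidef_self_mul_conjTranspose X).1.eigenvalues) *
    (star (Matrix.posSemidef_self_mul_conjTranspose X).1.eigenvectorUnitary : Matrix m m ℝ)

/-- Membership in the orthogonal group `O(d)`. -/
def IsOd (g : Matrix (Fin d) (Fin d) ℝ) : Prop :=
  gᵀ * g = 1 ∧ g * gᵀ = 1

/-- Membership in the special orthogonal group `SO(d)`. -/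
def IsSOd (g : Matrix (Fin d) (Fin d) ℝ) : Prop :=
  IsOd g ∧ g.det = 1

/-- The `i`-th `d × d` block of an `nd × d` matrix. -/
def blk (X : Matrix (Fin n × Fin d) (Fin d) ℝ) (i : Fin n) : Matrix (Fin d) (Fin d) ℝ :=
  Matrix.of fun a b => X (i, a) b

/-- Membership in `O(d)^{⊗n}`: every `d × d` block is orthogonal. -/
def OdN (G : Matrix (Fin n × Fin d) (Fin d) ℝ) : Prop :=
  ∀ i : Fin n, IsOd (blk G i)

/-- Membership in `SO(d)^{⊗n}`. -/
def SOdN (G : Matrix (Fin n × Fin d) (Fin d) ℝ) : Prop :=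
  ∀ i : Fin n, IsSOd (blk G i)

/-- The `i`-th block column (an `nd × d` matrix) of an `nd × nd` matrix. -/
def bcol (M : Matrix (Fin n × Fin d) (Fin n × Fin d) ℝ) (i : Fin n) :
    Matrix (Fin n × Fin d) (Fin d) ℝ :=
  Matrix.of fun p b => M p (i, b)

/-- The `ij`-th `d × d` block of an `nd × nd` matrix. -/
def dblk (M : Matrix (Fin n × Fin d) (Fin n × Fin d) ℝ) (i j : Fin n) :
    Matrix (Fin d) (Fin d) ℝ :=
  Matrix.of fun a b => M (i, a) (j, b)

/-- `G' ∈ T_α(G)` (where `Ct = C + α I`): `G' ∈ O(d)^{⊗n}` and each block `G'_i` is a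
nearest point of `C̃ᵢᵀ G` in `O(d)` w.r.t. the Frobenius norm. -/
def InT (Ct : Matrix (Fin n × Fin d) (Fin n × Fin d) ℝ)
    (G G' : Matrix (Fin n × Fin d) (Fin d) ℝ) : Prop :=
  OdN G' ∧ ∀ i : Fin n, ∀ X : Matrix (Fin d) (Fin d) ℝ, IsOd X →
    frob (blk G' i - (bcol Ct i)ᵀ * G) ≤ frob (X - (bcol Ct i)ᵀ * G)

/-- `G' ∈ ST_α(G)`: the `SO(d)` analogue of `InT`. -/
def InST (Ct : Matrix (Fin n × Fin d) (Fin n × Fin d) ℝ)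
    (G G' : Matrix (Fin n × Fin d) (Fin d) ℝ) : Prop :=
  SOdN G' ∧ ∀ i : Fin n, ∀ X : Matrix (Fin d) (Fin d) ℝ, IsSOd X →
    frob (blk G' i - (bcol Ct i)ᵀ * G) ≤ frob (X - (bcol Ct i)ᵀ * G)

/-- The quotient distance `d(X, Y) = min_{g ∈ O(d)} ‖X − Y g‖_F`. -/
def dOrth (X Y : Matrix (Fin n × Fin d) (Fin d) ℝ) : ℝ :=
  ⨅ g : {g : Matrix (Fin d) (Fin d) ℝ // IsOd g}, frob (X - Y * g.1)

/-- The objective function `f(G) = tr(Gᵀ C G)`. -/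
def obj (C : Matrix (Fin n × Fin d) (Fin n × Fin d) ℝ)
    (G : Matrix (Fin n × Fin d) (Fin d) ℝ) : ℝ :=
  Matrix.trace (Gᵀ * C * G)

/-- Hadamard (entrywise) product. -/
def had {m k : Type*} (X Y : Matrix m k ℝ) : Matrix m k ℝ :=
  Matrix.of fun p q => X p q * Y p q

/-- `W ⊗ (1_d 1_dᵀ)`, the Kronecker product of `W` with the all-ones `d × d` matrix. -/
def kron1 (W : Matrix (Fin n) (Fin n) ℝ) : Matrix (Fin n × Fin d) (Fin n × Fin d) ℝ :=
  Matrix.kroneckerMap (· * ·) W (Matrix.of fun (_ _ : Fin d) => (1 : ℝ))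

/-- The all-ones matrix `1_m 1_mᵀ`. -/
def onesMat (m : Type*) : Matrix m m ℝ :=
  Matrix.of fun _ _ => (1 : ℝ)

/-- `symblockdiag`: symmetrize the diagonal `d × d` blocks, zero out all other blocks. -/
def sbd (X : Matrix (Fin n × Fin d) (Fin n × Fin d) ℝ) :
    Matrix (Fin n × Fin d) (Fin n × Fin d) ℝ :=
  Matrix.of fun p q => if p.1 = q.1 then (X p q + X (p.1, q.2) (q.1, p.2)) / 2 else 0

/-- `S(G) = symblockdiag(C G Gᵀ) − C`. -/
def Smat (C : Matrix (Fin n × Fin d) (Fin n × Fin d) ℝ)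
    (G : Matrix (Fin n × Fin d) (Fin d) ℝ) : Matrix (Fin n × Fin d) (Fin n × Fin d) ℝ :=
  sbd (C * (G * Gᵀ)) - C

/-- `G` is a second-order critical point of (QP): `S(G) G = 0` and
`⟨H, S(G) H⟩ ≥ 0` for all tangent directions `H` (blockwise `Hᵢ Gᵢᵀ` skew-symmetric). -/
def IsSOC (C : Matrix (Fin n × Fin d) (Fin n × Fin d) ℝ)
    (G : Matrix (Fin n × Fin d) (Fin d) ℝ) : Prop :=
  Smat C G * G = 0 ∧
  ∀ H : Matrix (Fin n × Fin d) (Fin d) ℝ,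
    (∀ i : Fin n, (blk H i * (blk G i)ᵀ)ᵀ = -(blk H i * (blk G i)ᵀ)) →
    0 ≤ Matrix.trace (Hᵀ * (Smat C G * H))

/-- Smallest singular value of a square matrix, as the minimum of `‖M v‖` over
unit vectors `v`. -/
def sigmaMin (M : Matrix (Fin d) (Fin d) ℝ) : ℝ :=
  ⨅ v : {v : Fin d → ℝ // ∑ a, (v a) ^ 2 = 1}, Real.sqrt (∑ a, (M.mulVec v.1 a) ^ 2)

/-- The singular values of a square matrix: square roots of the eigenvalues of `Mᵀ M`. -/
def singVal (M : Matrix (Fin d) (Fin d) ℝ) (l : Fin d) : ℝ :=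
  Real.sqrt ((show (Mᵀ * M).IsHermitian from Matrix.isHermitian_conjTranspose_mul_self M).eigenvalues l)

/-- Smallest eigenvalue of a (symmetric) matrix, as the minimum Rayleigh quotient
over unit vectors. -/
def lambdaMin {m : Type*} [Fintype m] (M : Matrix m m ℝ) : ℝ :=
  ⨅ v : {v : m → ℝ // ∑ i, (v i) ^ 2 = 1}, v.1 ⬝ᵥ M.mulVec v.1

/-- `D_α(G)`: block diagonal of the psd square roots of `(C̃ᵢᵀ G)(C̃ᵢᵀ G)ᵀ`, minus `C̃`. -/
def Dmat (Ct : Matrix (Fin n × Fin d) (Fin n × Fin d) ℝ)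
    (G : Matrix (Fin n × Fin d) (Fin d) ℝ) : Matrix (Fin n × Fin d) (Fin n × Fin d) ℝ :=
  (Matrix.of fun p q =>
    if p.1 = q.1 then psdSqrtMulT ((bcol Ct p.1)ᵀ * G) p.2 q.2 else 0) - Ct

/-- The residual function `ρ_α(G) = ‖D_α(G) G‖_F`. -/
def rho (Ct : Matrix (Fin n × Fin d) (Fin n × Fin d) ℝ)
    (G : Matrix (Fin n × Fin d) (Fin d) ℝ) : ℝ :=
  frob (Dmat Ct G * G)

/-- Blockwise infinity norm: `‖X‖_∞ = max_i ‖X_i‖` (spectral norm of the blocks). -/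
def binf (X : Matrix (Fin n × Fin d) (Fin d) ℝ) : ℝ :=
  ⨆ i : Fin n, spec (blk X i)

/-! ### Auxiliary lemmas for the fixed point characterization -/

section FixedPointAux

lemma IsOd.mul' {X Y : Matrix (Fin d) (Fin d) ℝ} (hX : IsOd X) (hY : IsOd Y) :
    IsOd (X * Y) := by
  constructor
  · rw [Matrix.transpose_mul, Matrix.mul_assoc, ← Matrix.mul_assoc Xᵀ, hX.1,
      Matrix.one_mul, hY.1]
  · rw [Matrix.transpose_mul, Matrix.mul_assoc, ← Matrix.mul_assoc Y, hY.2,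
      Matrix.one_mul, hX.2]

section SqrtAux
open scoped MatrixOrder

lemma psdSqrtMulT_eq_sqrt {m k : Type*} [Fintype m] [Fintype k] [DecidableEq m]
    (X : Matrix m k ℝ) : psdSqrtMulT X = CFC.sqrt (X * Xᴴ) := by
  have h0 : (0 : Matrix m m ℝ) ≤ X * Xᴴ :=
    Matrix.nonneg_iff_posSemidef.mpr (Matrix.posSemidef_self_mul_conjTranspose X)
  rw [CFC.sqrt_eq_real_sqrt _ h0, cfcₙ_eq_cfc,
    Matrix.IsHermitian.cfc_eq (Matrix.posSemidef_self_mul_conjTranspose X).1 Real.sqrt]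
  rfl

lemma psdSqrtMulT_posSemidef (A : Matrix (Fin d) (Fin d) ℝ) : (psdSqrtMulT A).PosSemidef := by
  rw [psdSqrtMulT_eq_sqrt]
  exact Matrix.nonneg_iff_posSemidef.mp (CFC.sqrt_nonneg _)

lemma psdSqrtMulT_mul_self (A : Matrix (Fin d) (Fin d) ℝ) :
    psdSqrtMulT A * psdSqrtMulT A = A * Aᴴ := by
  rw [psdSqrtMulT_eq_sqrt]
  exact CFC.sqrt_mul_sqrt_self _
    (Matrix.nonneg_iff_posSemidef.mpr (Matrix.posSemidef_self_mul_conjTranspose A))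

lemma eq_psdSqrtMulT_of_posSemidef {B : Matrix (Fin d) (Fin d) ℝ} (hB : B.PosSemidef) :
    B = psdSqrtMulT B := by
  rw [psdSqrtMulT_eq_sqrt, hB.1.eq, CFC.sqrt_mul_self B (Matrix.nonneg_iff_posSemidef.mpr hB)]

end SqrtAux

lemma psdSqrtMulT_congr {A B : Matrix (Fin d) (Fin d) ℝ} (h : A * Aᴴ = B * Bᴴ) :
    psdSqrtMulT A = psdSqrtMulT B := by
  rw [psdSqrtMulT_eq_sqrt, psdSqrtMulT_eq_sqrt, h]

lemma vmv_mul (u v w x : Fin d → ℝ) :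
    Matrix.vecMulVec u v * Matrix.vecMulVec w x = (v ⬝ᵥ w) • Matrix.vecMulVec u x := by
  ext i j
  simp only [Matrix.mul_apply, Matrix.vecMulVec_apply, Matrix.smul_apply,
    dotProduct, smul_eq_mul, Finset.sum_mul]
  exact Finset.sum_congr rfl fun k _ => by ring

lemma vmv_transpose (u v : Fin d → ℝ) :
    (Matrix.vecMulVec u v)ᵀ = Matrix.vecMulVec v u := by
  ext i j
  simp [Matrix.vecMulVec_apply, mul_comm]

lemma trace_vmv_mul (u v : Fin d → ℝ) (B : Matrix (Fin d) (Fin d) ℝ) :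
    (Matrix.vecMulVec u v * B).trace = v ⬝ᵥ (B *ᵥ u) := by
  simp only [Matrix.trace, Matrix.diag_apply, Matrix.mul_apply, Matrix.vecMulVec_apply,
    dotProduct, Matrix.mulVec, Finset.mul_sum]
  rw [Finset.sum_comm]
  refine Finset.sum_congr rfl fun k _ => Finset.sum_congr rfl fun p _ => by ring

lemma trace_core (A : Matrix (Fin d) (Fin d) ℝ) :
    A.trace ≤ (psdSqrtMulT A).trace ∧
      (A.trace = (psdSqrtMulT A).trace → A = psdSqrtMulT A) := by
  classical
  have hSpos : (psdSqrtMulT A).PosSemidef :=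
    psdSqrtMulT_posSemidef A
  set S := psdSqrtMulT A with hSdef
  have hSH : S.IsHermitian := hSpos.1
  have hSS : S * S = A * Aᴴ := psdSqrtMulT_mul_self A
  set V : Matrix (Fin d) (Fin d) ℝ :=
    (Matrix.IsHermitian.eigenvectorUnitary hSH : Matrix (Fin d) (Fin d) ℝ) with hVdef
  have hV1 : V * star V = 1 :=
    Matrix.mem_unitaryGroup_iff.mp (Matrix.IsHermitian.eigenvectorUnitary hSH).2
  set lam : Fin d → ℝ := hSH.eigenvalues with hlam
  have hdiag : star V * S * V = Matrix.diagonal lam := by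
    have h : star V * S * V = Matrix.diagonal (RCLike.ofReal ∘ lam) := by
      simpa using hSH.conjStarAlgAut_star_eigenvectorUnitary
    rw [RCLike.ofReal_real_eq_id] at h
    simpa using h
  set N := star V * A * V with hN
  have hVmid : ∀ X : Matrix (Fin d) (Fin d) ℝ, V * (star V * X) = X := by
    intro X; rw [← Matrix.mul_assoc, hV1, Matrix.one_mul]
  have htrA : N.trace = A.trace := by
    rw [hN, Matrix.trace_mul_comm, ← Matrix.mul_assoc, hV1, Matrix.one_mul]
  have htrS : (Matrix.diagonal lam).trace = S.trace := by
    rw [← hdiag, Matrix.trace_mul_comm, ← Matrix.mul_assoc, hV1, Matrix.one_mul]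
  have hNN : N * Nᴴ = Matrix.diagonal (fun k => lam k * lam k) := by
    have hNH : Nᴴ = star V * Aᴴ * V := by
      rw [hN]
      simp only [← Matrix.star_eq_conjTranspose, StarMul.star_mul, star_star,
        Matrix.mul_assoc]
    calc N * Nᴴ = star V * (A * (V * (star V * (Aᴴ * V)))) := by
          rw [hN, hNH]; simp only [Matrix.mul_assoc]
      _ = star V * ((A * Aᴴ) * V) := by rw [hVmid, Matrix.mul_assoc]
      _ = star V * (S * (S * V)) := by rw [← hSS, Matrix.mul_assoc]
      _ = star V * (S * (V * (star V * (S * V)))) := by rw [hVmid]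
      _ = (star V * S * V) * (star V * S * V) := by simp only [Matrix.mul_assoc]
      _ = Matrix.diagonal lam * Matrix.diagonal lam := by rw [hdiag]
      _ = Matrix.diagonal (fun k => lam k * lam k) := Matrix.diagonal_mul_diagonal _ _
  have hlam0 : ∀ k, 0 ≤ lam k := fun k => hSpos.eigenvalues_nonneg k
  have hrow : ∀ k, ∑ j, (N k j) ^ 2 = (lam k) ^ 2 := by
    intro k
    have h := congrFun (congrFun hNN k) k
    simp only [Matrix.mul_apply, Matrix.conjTranspose_apply, star_trivial,
      Matrix.diagonal_apply_eq] at h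
    simpa [pow_two] using h
  have hterm : ∀ k, N k k ≤ lam k := by
    intro k
    have h1 : (N k k) ^ 2 ≤ (lam k) ^ 2 := by
      rw [← hrow k]
      exact Finset.single_le_sum (fun j _ => sq_nonneg (N k j)) (Finset.mem_univ k)
    nlinarith [hlam0 k]
  have htrace_le : N.trace ≤ (Matrix.diagonal lam).trace := by
    simp only [Matrix.trace, Matrix.diag_apply, Matrix.diagonal_apply_eq]
    exact Finset.sum_le_sum fun k _ => hterm k
  refine ⟨by calc A.trace = N.trace := htrA.symm
      _ ≤ (Matrix.diagonal lam).trace := htrace_le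
      _ = S.trace := htrS, ?_⟩
  intro heq
  have hNtr : N.trace = (Matrix.diagonal lam).trace := by rw [htrA, heq, htrS]
  have hsum : ∑ k, (lam k - N k k) = 0 := by
    have h1 : N.trace = ∑ k, N k k := by simp [Matrix.trace, Matrix.diag_apply]
    have h2 : (Matrix.diagonal lam).trace = ∑ k, lam k := by
      simp [Matrix.trace, Matrix.diag_apply]
    rw [h1, h2] at hNtr
    rw [Finset.sum_sub_distrib, hNtr, sub_self]
  have hdiagk : ∀ k, N k k = lam k := by
    have h0 := (Finset.sum_eq_zero_iff_of_nonneg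
      (fun k _ => sub_nonneg.mpr (hterm k))).mp hsum
    intro k
    have := h0 k (Finset.mem_univ k)
    linarith
  have hNdiag : N = Matrix.diagonal lam := by
    ext k j
    by_cases hkj : k = j
    · subst hkj; simp [Matrix.diagonal_apply_eq, hdiagk k]
    · have h1 : ∑ j, (N k j) ^ 2 = (N k k) ^ 2 := by rw [hrow, hdiagk]
      have h2 : ∑ j ∈ Finset.univ.erase k, (N k j) ^ 2 = 0 := by
        have h3 : N k k ^ 2 + ∑ x ∈ Finset.univ.erase k, N k x ^ 2
            = ∑ x : Fin d, N k x ^ 2 :=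
          Finset.add_sum_erase Finset.univ (fun x => N k x ^ 2) (Finset.mem_univ k)
        rw [h1] at h3
        linarith
      have h4 := (Finset.sum_eq_zero_iff_of_nonneg (fun j _ => sq_nonneg _)).mp h2 j
        (Finset.mem_erase.mpr ⟨fun h => hkj h.symm, Finset.mem_univ j⟩)
      have h5 : N k j = 0 := by
        have := sq_nonneg (N k j); nlinarith
      rw [h5, Matrix.diagonal_apply_ne _ hkj]
  have key : ∀ X : Matrix (Fin d) (Fin d) ℝ, V * (star V * X * V) * star V = X := by
    intro X
    calc V * (star V * X * V) * star V = V * (star V * (X * (V * star V))) := by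
          simp only [Matrix.mul_assoc]
      _ = V * (star V * X) := by rw [hV1, Matrix.mul_one]
      _ = X := hVmid X
  have hAeq : A = V * Matrix.diagonal lam * star V := by
    rw [← hNdiag, hN]; exact (key A).symm
  have hSeq : S = V * Matrix.diagonal lam * star V := by
    rw [← hdiag]; exact (key S).symm
  rw [hAeq, hSeq]

lemma forall_t_mul_le_sq (s c : ℝ) (h : ∀ t : ℝ, t * s ≤ t ^ 2 * c) : s = 0 := by
  by_contra hs
  obtain ⟨a, ha⟩ : ∃ x : ℝ, x = |c| + 1 := ⟨_, rfl⟩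
  have h0 : 0 < a := by rw [ha]; positivity
  have hc : c ≤ a - 1 := by rw [ha]; linarith [le_abs_self c]
  have han : (2 * a) ≠ 0 := by positivity
  have ht := h (s / (2 * a))
  have hs' : s / (2 * a) * (2 * a) = s := by field_simp
  have ht0ne : s / (2 * a) ≠ 0 := div_ne_zero hs han
  have ht0sq : 0 < (s / (2 * a)) ^ 2 := by positivity
  have key : (s / (2 * a)) * ((s / (2 * a)) * (2 * a)) ≤ (s / (2 * a)) ^ 2 * c := by
    rw [hs']; exact ht
  nlinarith [mul_le_mul_of_nonneg_left hc (le_of_lt ht0sq), mul_pos ht0sq h0]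

lemma eq_sqrt_of_max (B : Matrix (Fin d) (Fin d) ℝ)
    (h : ∀ R : Matrix (Fin d) (Fin d) ℝ, IsOd R → (Rᵀ * B).trace ≤ B.trace) :
    B = psdSqrtMulT B := by
  classical
  -- Step 1 : `B` is symmetric (via Cayley–Givens rotations)
  have hsym : Bᵀ = B := by
    ext b a
    show B a b = B b a
    rcases eq_or_ne a b with rfl | hab
    · rfl
    · have main : ∀ t : ℝ, t * (B b a - B a b) ≤ t ^ 2 * (B a a + B b b) := by
        intro t
        set ea : Fin d → ℝ := Pi.single a 1 with hea
        set eb : Fin d → ℝ := Pi.single b 1 with heb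
        have hdaa : ea ⬝ᵥ ea = 1 := by
          simp [hea, single_dotProduct, Pi.single_apply]
        have hdbb : eb ⬝ᵥ eb = 1 := by
          simp [heb, single_dotProduct, Pi.single_apply]
        have hdab : ea ⬝ᵥ eb = 0 := by
          simp [hea, heb, single_dotProduct, Pi.single_apply, hab]
        have hdba : eb ⬝ᵥ ea = 0 := by
          simp [hea, heb, single_dotProduct, Pi.single_apply, Ne.symm hab]
        set P : Matrix (Fin d) (Fin d) ℝ :=
          Matrix.vecMulVec ea ea + Matrix.vecMulVec eb eb with hPdef
        set K : Matrix (Fin d) (Fin d) ℝ :=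
          Matrix.vecMulVec eb ea - Matrix.vecMulVec ea eb with hKdef
        have hPP : P * P = P := by
          simp [hPdef, mul_add, add_mul, vmv_mul, hdaa, hdbb, hdab, hdba]
        have hKK : K * K = -P := by
          simp [hPdef, hKdef, mul_sub, sub_mul, vmv_mul, hdaa, hdbb, hdab, hdba]
          abel
        have hPK : P * K = K := by
          simp [hPdef, hKdef, mul_sub, sub_mul, mul_add, add_mul, vmv_mul,
            hdaa, hdbb, hdab, hdba]
        have hKP : K * P = K := by
          simp [hPdef, hKdef, mul_sub, sub_mul, mul_add, add_mul, vmv_mul,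
            hdaa, hdbb, hdab, hdba]
          abel
        have hPt : Pᵀ = P := by simp [hPdef, Matrix.transpose_add, vmv_transpose]
        have hKt : Kᵀ = -K := by
          simp [hKdef, Matrix.transpose_sub, vmv_transpose]
        have ht2 : (0:ℝ) < 1 + t ^ 2 := by positivity
        set c1 : ℝ := -(2 * t ^ 2) / (1 + t ^ 2) with hc1
        set s1 : ℝ := (2 * t) / (1 + t ^ 2) with hs1
        have hcoef : c1 * c1 + 2 * c1 + s1 * s1 = 0 := by
          rw [hc1, hs1]
          field_simp
          ring
        set R : Matrix (Fin d) (Fin d) ℝ := 1 + c1 • P + s1 • K with hRdef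
        have hRT : Rᵀ = 1 + c1 • P - s1 • K := by
          simp [hRdef, Matrix.transpose_add, Matrix.transpose_smul, hPt, hKt,
            smul_neg, sub_eq_add_neg]
        have hprod : (1 + c1 • P - s1 • K) * (1 + c1 • P + s1 • K)
            = 1 + (c1 * c1 + 2 * c1 + s1 * s1) • P := by
          simp only [mul_add, add_mul, sub_mul, mul_sub, Matrix.one_mul, Matrix.mul_one,
            Matrix.smul_mul, Matrix.mul_smul, hPP, hKK, hPK, hKP, smul_smul, smul_neg]
          module
        have hprod' : (1 + c1 • P + s1 • K) * (1 + c1 • P - s1 • K)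
            = 1 + (c1 * c1 + 2 * c1 + s1 * s1) • P := by
          simp only [mul_add, add_mul, sub_mul, mul_sub, Matrix.one_mul, Matrix.mul_one,
            Matrix.smul_mul, Matrix.mul_smul, hPP, hKK, hPK, hKP, smul_smul, smul_neg]
          module
        have hRo : IsOd R := by
          constructor
          · rw [hRT, hRdef, hprod, hcoef, zero_smul, add_zero]
          · rw [hRT, hRdef, hprod', hcoef, zero_smul, add_zero]
        have htr := h R hRo
        have htrP : (P * B).trace = B a a + B b b := by
          rw [hPdef, Matrix.add_mul, Matrix.trace_add, trace_vmv_mul, trace_vmv_mul]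
          simp [hea, heb, Matrix.mulVec_single, single_dotProduct]
        have htrK : (K * B).trace = B a b - B b a := by
          rw [hKdef, Matrix.sub_mul, Matrix.trace_sub, trace_vmv_mul, trace_vmv_mul]
          simp [hea, heb, Matrix.mulVec_single, single_dotProduct]
        have htr2 : (Rᵀ * B).trace
            = B.trace + (c1 * (B a a + B b b) - s1 * (B a b - B b a)) := by
          rw [hRT, Matrix.sub_mul, Matrix.add_mul, Matrix.one_mul, Matrix.smul_mul,
            Matrix.smul_mul, Matrix.trace_sub, Matrix.trace_add, Matrix.trace_smul,
            Matrix.trace_smul, htrP, htrK]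
          simp [smul_eq_mul]
          ring
        have hineq : c1 * (B a a + B b b) - s1 * (B a b - B b a) ≤ 0 := by
          rw [htr2] at htr
          linarith
        have h3 : t * (B b a - B a b) - t ^ 2 * (B a a + B b b)
            = (c1 * (B a a + B b b) - s1 * (B a b - B b a)) * ((1 + t ^ 2) / 2) := by
          rw [hc1, hs1]
          field_simp
          ring
        nlinarith [mul_nonneg (neg_nonneg.mpr hineq) (le_of_lt (by positivity : (0:ℝ) < (1 + t ^ 2) / 2))]
      have h0 := forall_t_mul_le_sq _ _ main
      linarith
  -- Step 2 : `B` is positive semidefinite (via Householder reflections)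
  have hH : B.IsHermitian := by
    show Bᴴ = B
    rw [Matrix.conjTranspose_eq_transpose_of_trivial, hsym]
  have hev : ∀ k, 0 ≤ hH.eigenvalues k := by
    intro k
    set v : Fin d → ℝ := ⇑(hH.eigenvectorBasis k) with hv
    have hmv : B *ᵥ v = hH.eigenvalues k • v := hH.mulVec_eigenvectorBasis k
    have hunit : v ⬝ᵥ v = 1 := by
      have h1 := hH.eigenvectorBasis.orthonormal.1 k
      have h2 : (inner ℝ (hH.eigenvectorBasis k) (hH.eigenvectorBasis k) : ℝ) = v ⬝ᵥ v := by
        rw [EuclideanSpace.inner_eq_star_dotProduct]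
        simp [hv]
      have h3 : (inner ℝ (hH.eigenvectorBasis k) (hH.eigenvectorBasis k) : ℝ)
          = ‖hH.eigenvectorBasis k‖ ^ 2 := real_inner_self_eq_norm_sq _
      rw [← h2, h3, h1, one_pow]
    set R : Matrix (Fin d) (Fin d) ℝ := 1 - (2:ℝ) • Matrix.vecMulVec v v with hRdef
    have hmm : Matrix.vecMulVec v v * Matrix.vecMulVec v v = Matrix.vecMulVec v v := by
      rw [vmv_mul, hunit, one_smul]
    have hRsym : Rᵀ = R := by
      simp [hRdef, Matrix.transpose_sub, Matrix.transpose_smul, vmv_transpose]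
    have hRR : R * R = 1 := by
      simp only [hRdef, sub_mul, mul_sub, Matrix.one_mul, Matrix.mul_one,
        Matrix.smul_mul, Matrix.mul_smul, hmm, smul_smul]
      module
    have hRo : IsOd R := ⟨by rw [hRsym, hRR], by rw [hRsym, hRR]⟩
    have htr := h R hRo
    have htr2 : (Rᵀ * B).trace = B.trace - 2 * hH.eigenvalues k := by
      rw [hRsym, hRdef, Matrix.sub_mul, Matrix.one_mul, Matrix.trace_sub,
        Matrix.smul_mul, Matrix.trace_smul, trace_vmv_mul, hmv]
      rw [dotProduct_smul, hunit]
      simp [smul_eq_mul]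
    rw [htr2] at htr
    linarith
  have hpsd : B.PosSemidef := hH.posSemidef_iff_eigenvalues_nonneg.mpr hev
  exact eq_psdSqrtMulT_of_posSemidef hpsd

lemma trace_transpose_mul_eq_sum (Z M : Matrix (Fin d) (Fin d) ℝ) :
    (Zᵀ * M).trace = ∑ i, ∑ j, Z i j * M i j := by
  simp only [Matrix.trace, Matrix.diag_apply, Matrix.mul_apply, Matrix.transpose_apply]
  rw [Finset.sum_comm]

lemma sum_sq_of_isOd {Z : Matrix (Fin d) (Fin d) ℝ} (hZ : IsOd Z) :
    ∑ i, ∑ j, (Z i j) ^ 2 = (d : ℝ) := by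
  have h := congrArg Matrix.trace hZ.1
  rw [Matrix.trace_one, trace_transpose_mul_eq_sum] at h
  simpa [pow_two, Fintype.card_fin] using h

lemma frob_le_frob_iff {X Y M : Matrix (Fin d) (Fin d) ℝ} (hX : IsOd X) (hY : IsOd Y) :
    frob (X - M) ≤ frob (Y - M) ↔ (Yᵀ * M).trace ≤ (Xᵀ * M).trace := by
  have key : ∀ Z : Matrix (Fin d) (Fin d) ℝ, IsOd Z →
      (∑ i, ∑ j, ((Z - M) i j) ^ 2)
        = (d : ℝ) - 2 * (Zᵀ * M).trace + ∑ i, ∑ j, (M i j) ^ 2 := by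
    intro Z hZ
    calc (∑ i, ∑ j, ((Z - M) i j) ^ 2)
        = ∑ i, ∑ j, (Z i j ^ 2 - 2 * (Z i j * M i j) + M i j ^ 2) := by
          refine Finset.sum_congr rfl fun i _ => Finset.sum_congr rfl fun j _ => ?_
          simp [Matrix.sub_apply]
          ring
      _ = (∑ i, ∑ j, Z i j ^ 2) - 2 * (∑ i, ∑ j, Z i j * M i j)
            + ∑ i, ∑ j, M i j ^ 2 := by
          simp [Finset.sum_add_distrib, Finset.sum_sub_distrib, Finset.mul_sum]
      _ = (d : ℝ) - 2 * (Zᵀ * M).trace + ∑ i, ∑ j, (M i j) ^ 2 := by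
          rw [sum_sq_of_isOd hZ, trace_transpose_mul_eq_sum]
  have hnn : ∀ Z : Matrix (Fin d) (Fin d) ℝ,
      0 ≤ ∑ i, ∑ j, ((Z - M) i j) ^ 2 := fun Z =>
    Finset.sum_nonneg fun i _ => Finset.sum_nonneg fun j _ => sq_nonneg _
  constructor
  · intro hf
    have h1 : (∑ i, ∑ j, ((X - M) i j) ^ 2) ≤ ∑ i, ∑ j, ((Y - M) i j) ^ 2 := by
      have := (Real.sqrt_le_sqrt_iff (hnn Y)).mp hf
      exact this
    rw [key X hX, key Y hY] at h1
    linarith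
  · intro ht
    show Real.sqrt _ ≤ Real.sqrt _
    apply Real.sqrt_le_sqrt
    rw [key X hX, key Y hY]
    linarith

lemma mul_transpose_isOd {M X : Matrix (Fin d) (Fin d) ℝ} (hX : IsOd X) :
    (M * Xᵀ) * (M * Xᵀ)ᴴ = M * Mᴴ := by
  rw [Matrix.conjTranspose_eq_transpose_of_trivial, Matrix.conjTranspose_eq_transpose_of_trivial,
    Matrix.transpose_mul, Matrix.transpose_transpose, Matrix.mul_assoc,
    ← Matrix.mul_assoc Xᵀ, hX.1, Matrix.one_mul]

lemma trace_block_sum (Ct : Matrix (Fin n × Fin d) (Fin n × Fin d) ℝ)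
    (G : Matrix (Fin n × Fin d) (Fin d) ℝ) :
    (Gᵀ * Ct * G).trace = ∑ i : Fin n, ((bcol Ct i)ᵀ * G * (blk G i)ᵀ).trace := by
  have lhs_eq : (Gᵀ * Ct * G).trace = ∑ q : Fin n × Fin d, ∑ b : Fin d,
      ∑ p : Fin n × Fin d, Ct p q * G p b * G q b := by
    simp only [Matrix.trace, Matrix.diag_apply, Matrix.mul_apply, Matrix.transpose_apply,
      Finset.sum_mul]
    rw [Finset.sum_comm]
    exact Finset.sum_congr rfl fun q _ => Finset.sum_congr rfl fun b _ =>
      Finset.sum_congr rfl fun p _ => by ring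
  have rhs_eq : ∀ i : Fin n, ((bcol Ct i)ᵀ * G * (blk G i)ᵀ).trace
      = ∑ a : Fin d, ∑ b : Fin d, ∑ p : Fin n × Fin d, Ct p (i, a) * G p b * G (i, a) b := by
    intro i
    simp only [Matrix.trace, Matrix.diag_apply, Matrix.mul_apply, Matrix.transpose_apply,
      bcol, blk, Matrix.of_apply, Finset.sum_mul]
  rw [lhs_eq, Fintype.sum_prod_type]
  exact Finset.sum_congr rfl fun i _ => (rhs_eq i).symm

end FixedPointAux

/-- Lemma: characterization of fixed points of the GPM map `T_α`.
For `α ≥ 0`, `C` symmetric and `G ∈ O(d)^{⊗n}`, with `C̃ = C + α I`, the following are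
equivalent: (a) `G ∈ T_α(G)`; (b) `C̃ᵢᵀ G Gᵢᵀ = ((C̃ᵢᵀ G)(C̃ᵢᵀ G)ᵀ)^{1/2}` for all `i`;
(c) `tr(C̃ᵢᵀ G Gᵢᵀ) = ‖C̃ᵢᵀ G‖_*` for all `i`; (d) `tr(Gᵀ C̃ G) = Σᵢ ‖C̃ᵢᵀ G‖_*`. -/
theorem fixed_point_characterization {n d : ℕ}
    (C : Matrix (Fin n × Fin d) (Fin n × Fin d) ℝ) (hCsymm : Cᵀ = C)
    (α : ℝ) (hα : 0 ≤ α)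
    (Ct : Matrix (Fin n × Fin d) (Fin n × Fin d) ℝ)
    (hCt : Ct = C + α • (1 : Matrix (Fin n × Fin d) (Fin n × Fin d) ℝ))
    (G : Matrix (Fin n × Fin d) (Fin d) ℝ) (hG : OdN G) :
    (InT Ct G G ↔
      ∀ i : Fin n, (bcol Ct i)ᵀ * G * (blk G i)ᵀ = psdSqrtMulT ((bcol Ct i)ᵀ * G)) ∧
    (InT Ct G G ↔
      ∀ i : Fin n,
        Matrix.trace ((bcol Ct i)ᵀ * G * (blk G i)ᵀ) = nuclear ((bcol Ct i)ᵀ * G)) ∧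
    (InT Ct G G ↔
      Matrix.trace (Gᵀ * Ct * G) = ∑ i : Fin n, nuclear ((bcol Ct i)ᵀ * G)) := by
  classical
  have hMXT : ∀ (i : Fin n) (X : Matrix (Fin d) (Fin d) ℝ), IsOd X →
      ((bcol Ct i)ᵀ * G * Xᵀ) * ((bcol Ct i)ᵀ * G * Xᵀ)ᴴ
        = ((bcol Ct i)ᵀ * G) * ((bcol Ct i)ᵀ * G)ᴴ := fun i X hX => mul_transpose_isOd hX
  -- (a) → (b)
  have hab : InT Ct G G → ∀ i : Fin n,
      (bcol Ct i)ᵀ * G * (blk G i)ᵀ = psdSqrtMulT ((bcol Ct i)ᵀ * G) := by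
    intro hIn i
    have hmax : ∀ R : Matrix (Fin d) (Fin d) ℝ, IsOd R →
        (Rᵀ * ((bcol Ct i)ᵀ * G * (blk G i)ᵀ)).trace
          ≤ ((bcol Ct i)ᵀ * G * (blk G i)ᵀ).trace := by
      intro R hR
      have hfrob := hIn.2 i (R * blk G i) (hR.mul' (hG i))
      have htr := (frob_le_frob_iff (hG i) (hR.mul' (hG i))).mp hfrob
      have e1 : ((R * blk G i)ᵀ * ((bcol Ct i)ᵀ * G)).trace
          = (Rᵀ * ((bcol Ct i)ᵀ * G * (blk G i)ᵀ)).trace := by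
        rw [Matrix.transpose_mul, Matrix.mul_assoc, Matrix.trace_mul_comm,
          Matrix.mul_assoc]
      have e2 : ((blk G i)ᵀ * ((bcol Ct i)ᵀ * G)).trace
          = (((bcol Ct i)ᵀ * G) * (blk G i)ᵀ).trace := Matrix.trace_mul_comm _ _
      rw [← e1]
      exact htr.trans (le_of_eq e2)
    exact (eq_sqrt_of_max _ hmax).trans (psdSqrtMulT_congr (hMXT i (blk G i) (hG i)))
  -- (b) → (c)
  have hbc : (∀ i : Fin n,
        (bcol Ct i)ᵀ * G * (blk G i)ᵀ = psdSqrtMulT ((bcol Ct i)ᵀ * G)) →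
      ∀ i : Fin n, Matrix.trace ((bcol Ct i)ᵀ * G * (blk G i)ᵀ)
        = nuclear ((bcol Ct i)ᵀ * G) := by
    intro hb i
    rw [hb i]
    rfl
  -- the fundamental inequality
  have hle : ∀ (i : Fin n) (X : Matrix (Fin d) (Fin d) ℝ), IsOd X →
      (Xᵀ * ((bcol Ct i)ᵀ * G)).trace ≤ nuclear ((bcol Ct i)ᵀ * G) := by
    intro i X hX
    calc (Xᵀ * ((bcol Ct i)ᵀ * G)).trace
        = (((bcol Ct i)ᵀ * G) * Xᵀ).trace := Matrix.trace_mul_comm _ _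
      _ ≤ (psdSqrtMulT (((bcol Ct i)ᵀ * G) * Xᵀ)).trace := (trace_core _).1
      _ = (psdSqrtMulT ((bcol Ct i)ᵀ * G)).trace := by
          rw [psdSqrtMulT_congr (hMXT i X hX)]
      _ = nuclear ((bcol Ct i)ᵀ * G) := rfl
  -- (c) → (a)
  have hca : (∀ i : Fin n, Matrix.trace ((bcol Ct i)ᵀ * G * (blk G i)ᵀ)
        = nuclear ((bcol Ct i)ᵀ * G)) → InT Ct G G := by
    intro hc
    refine ⟨hG, fun i X hX => ?_⟩
    rw [frob_le_frob_iff (hG i) hX]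
    calc (Xᵀ * ((bcol Ct i)ᵀ * G)).trace
        ≤ nuclear ((bcol Ct i)ᵀ * G) := hle i X hX
      _ = ((bcol Ct i)ᵀ * G * (blk G i)ᵀ).trace := (hc i).symm
      _ = ((blk G i)ᵀ * ((bcol Ct i)ᵀ * G)).trace := Matrix.trace_mul_comm _ _
  -- (c) ↔ (d)
  have hcd : (∀ i : Fin n, Matrix.trace ((bcol Ct i)ᵀ * G * (blk G i)ᵀ)
        = nuclear ((bcol Ct i)ᵀ * G)) ↔
      Matrix.trace (Gᵀ * Ct * G) = ∑ i : Fin n, nuclear ((bcol Ct i)ᵀ * G) := by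
    constructor
    · intro hc
      rw [trace_block_sum]
      exact Finset.sum_congr rfl fun i _ => hc i
    · intro hd i
      have hsum : ∑ j : Fin n, ((bcol Ct j)ᵀ * G * (blk G j)ᵀ).trace
          = ∑ j : Fin n, nuclear ((bcol Ct j)ᵀ * G) := by
        rw [← trace_block_sum]
        exact hd
      have hper : ∀ j ∈ Finset.univ, ((bcol Ct j)ᵀ * G * (blk G j)ᵀ).trace
          ≤ nuclear ((bcol Ct j)ᵀ * G) := by
        intro j _
        have h1 := hle j (blk G j) (hG j)
        rw [Matrix.trace_mul_comm] at h1
        exact h1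
      exact (Finset.sum_eq_sum_iff_of_le hper).mp hsum i (Finset.mem_univ i)
  have hAC : InT Ct G G ↔ ∀ i : Fin n,
      Matrix.trace ((bcol Ct i)ᵀ * G * (blk G i)ᵀ) = nuclear ((bcol Ct i)ᵀ * G) :=
    ⟨fun h => hbc (hab h), hca⟩
  exact ⟨⟨hab, fun hb => hca (hbc hb)⟩, hAC, hAC.trans hcd⟩
end GroupSync
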